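/- The integer sequence (d₁, ..., dₙ) with d₁ ≥ ... ≥ dₙ appearing in the Dedekind–Weber diagonalization of a matrix A ∈ GL(n, L[x,x⁻¹]) is uniquely determined by A: if B·A·C = diag(x^{d₁},...,x^{dₙ}) and B'·A·C' = diag(x^{e₁},...,x^{eₙ}) with both sequences weakly decreasing, B,B' ∈ GL(n,L[x]) and C,C' ∈ GL(n,L[x⁻¹]), then dᵢ = eᵢ for all i. -/

import Mathlib

open Matrix LaurentPolynomial Polynomial

section DWAux

variable {L : Type*} [Field L]

lemma psi_eq (q : L[X]) :
    Polynomial.eval₂ (LaurentPolynomial.C : L →+* LaurentPolynomial L) (T (-1)) q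
      = invert (toLaurent q) := by
  induction q using Polynomial.induction_on' with
  | add p q hp hq => simp [Polynomial.eval₂_add, hp, hq]
  | monomial n a =>
      rw [Polynomial.eval₂_monomial, Polynomial.toLaurent_C_mul_T, _root_.map_mul, invert_C,
        invert_T, T_pow]
      norm_num

lemma toLaurent_apply_neg (q : L[X]) (k : ℤ) (hk : k < 0) : (toLaurent q).coeff k = 0 := by
  by_contra h
  have hmem : k ∈ (toLaurent q).coeff.support := Finsupp.mem_support_iff.mpr h
  rw [support_coeff_toLaurent] at hmem
  obtain ⟨m, _, rfl⟩ := Finset.mem_map.mp hmem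
  simp [Nat.castEmbedding] at hk
  omega

lemma key_poly (p q : L[X]) (m : ℤ) (hm : m < 0)
    (h : toLaurent p = T m * Polynomial.eval₂ (LaurentPolynomial.C : L →+* LaurentPolynomial L)
      (T (-1)) q) : p = 0 := by
  rw [psi_eq] at h
  rw [← Polynomial.toLaurent_eq_zero]
  apply LaurentPolynomial.ext
  intro k
  have := congrArg (fun f : LaurentPolynomial L => f.coeff k) h
  rw [show (T m : LaurentPolynomial L) = AddMonoidAlgebra.single m 1 from rfl] at this
  rw [AddMonoidAlgebra.coeff_single_mul_apply] at this
  by_cases hk : k < 0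
  · rw [toLaurent_apply_neg p k hk]
    simp
  · rw [this, invert_apply, one_mul, toLaurent_apply_neg q _ (by omega)]
    simp

lemma det_block {R : Type*} [CommRing R] {n : ℕ} (P : Matrix (Fin n) (Fin n) R) (k : Fin n)
    (h : ∀ i j, k ≤ i → j ≤ k → P i j = 0) : P.det = 0 := by
  rw [Matrix.det_apply]
  refine Finset.sum_eq_zero fun σ _ => ?_
  suffices hz : ∃ j, j ≤ k ∧ k ≤ σ j by
    obtain ⟨j, hj1, hj2⟩ := hz
    refine smul_eq_zero_of_right _ (Finset.prod_eq_zero (Finset.mem_univ j) ?_)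
    exact h _ _ hj2 hj1
  by_contra hc
  push_neg at hc
  have hmaps : ∀ j ∈ Finset.Iic k, σ j ∈ Finset.Iio k := by
    intro j hj
    simp only [Finset.mem_Iic] at hj
    exact Finset.mem_Iio.mpr (hc j hj)
  have := Finset.card_le_card_of_injOn σ hmaps (σ.injective.injOn)
  rw [Fin.card_Iic, Fin.card_Iio] at this
  omega

lemma entry_zero {n : ℕ} (P Q : Matrix (Fin n) (Fin n) (Polynomial L)) (d e : Fin n → ℤ)
    (heq : P.map (toLaurent : Polynomial L → LaurentPolynomial L) *
        Matrix.diagonal (fun i => T (d i)) =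
      Matrix.diagonal (fun i => T (e i)) *
        Q.map (fun p => Polynomial.eval₂ (LaurentPolynomial.C : L →+* LaurentPolynomial L)
          (T (-1)) p))
    (i j : Fin n) (h : e i < d j) : P i j = 0 := by
  have hij := congrFun (congrFun heq i) j
  rw [Matrix.mul_diagonal, Matrix.diagonal_mul] at hij
  simp only [Matrix.map_apply] at hij
  apply key_poly (P i j) (Q i j) (e i - d j) (by omega)
  have : toLaurent (P i j) * T (d j) * T (-(d j)) = T (e i) * Polynomial.eval₂
      (LaurentPolynomial.C : L →+* LaurentPolynomial L) (T (-1)) (Q i j) * T (-(d j)) := by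
    rw [hij]
  rw [mul_T_assoc, add_neg_cancel, T_zero, mul_one] at this
  rw [this, T_sub]
  ring

lemma map_nonsing_inv {R S : Type*} [CommRing R] [CommRing S] {n : ℕ} (f : R →+* S)
    (M : Matrix (Fin n) (Fin n) R) (h : IsUnit M.det) : (M.map ⇑f)⁻¹ = M⁻¹.map ⇑f := by
  apply Matrix.inv_eq_left_inv
  rw [← Matrix.map_mul, Matrix.nonsing_inv_mul _ h, Matrix.map_one _ f.map_zero f.map_one]

lemma half (n : ℕ)
    (A : Matrix (Fin n) (Fin n) (LaurentPolynomial L)) (hA : IsUnit A.det)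
    (B B' C C' : Matrix (Fin n) (Fin n) (Polynomial L)) (d e : Fin n → ℤ)
    (hB : IsUnit B.det) (hB' : IsUnit B'.det) (hC : IsUnit C.det) (hC' : IsUnit C'.det)
    (hd : Antitone d) (he : Antitone e)
    (h1 : B.map (Polynomial.toLaurent : Polynomial L → LaurentPolynomial L) * A *
        C.map (fun p => Polynomial.eval₂ (LaurentPolynomial.C : L →+* LaurentPolynomial L)
          (T (-1)) p) = Matrix.diagonal (fun i => T (d i)))
    (h2 : B'.map (Polynomial.toLaurent : Polynomial L → LaurentPolynomial L) * A *
        C'.map (fun p => Polynomial.eval₂ (LaurentPolynomial.C : L →+* LaurentPolynomial L)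
          (T (-1)) p) = Matrix.diagonal (fun i => T (e i))) :
    ∀ k, d k ≤ e k := by
  intro k
  by_contra hlt
  push_neg at hlt
  set f := (Polynomial.toLaurent : Polynomial L →+* LaurentPolynomial L) with hf
  set g := Polynomial.eval₂RingHom (LaurentPolynomial.C : L →+* LaurentPolynomial L)
    ((T (-1)) : LaurentPolynomial L) with hg
  have h1' : B.map ⇑f * A * C.map ⇑g = Matrix.diagonal (fun i => T (d i)) := h1
  have h2' : B'.map ⇑f * A * C'.map ⇑g = Matrix.diagonal (fun i => T (e i)) := h2
  have hBb : IsUnit ((B.map ⇑f).det) := by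
    have := hB.map f; rwa [RingHom.map_det, RingHom.mapMatrix_apply] at this
  have hC'b : IsUnit ((C'.map ⇑g).det) := by
    have := hC'.map g; rwa [RingHom.map_det, RingHom.mapMatrix_apply] at this
  have key : (B' * B⁻¹).map ⇑f * Matrix.diagonal (fun i => T (d i)) =
      Matrix.diagonal (fun i => T (e i)) * (C'⁻¹ * C).map ⇑g := by
    rw [Matrix.map_mul, Matrix.map_mul, ← map_nonsing_inv f B hB, ← map_nonsing_inv g C' hC']
    rw [← h1', ← h2']
    simp only [Matrix.mul_assoc]
    rw [Matrix.nonsing_inv_mul_cancel_left _ _ hBb, Matrix.mul_nonsing_inv_cancel_left _ _ hC'b]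
  have hzero : ∀ i j, k ≤ i → j ≤ k → (B' * B⁻¹) i j = 0 := by
    intro i j hi hj
    exact entry_zero _ (C'⁻¹ * C) d e key i j (lt_of_le_of_lt (he hi) (lt_of_lt_of_le hlt (hd hj)))
  have hP : IsUnit (B' * B⁻¹).det := by
    have hcan : B' * B⁻¹ * B = B' := Matrix.nonsing_inv_mul_cancel_right _ _ hB
    have hu : IsUnit ((B' * B⁻¹).det * B.det) := by rw [← Matrix.det_mul, hcan]; exact hB'
    exact isUnit_of_mul_isUnit_left hu
  rw [det_block _ k hzero] at hP
  exact hP.ne_zero rfl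

end DWAux

open Matrix LaurentPolynomial

/-- Uniqueness of the exponent sequence in the Dedekind–Weber diagonalization. -/
theorem dedekind_weber_unique (L : Type*) [Field L] (n : ℕ)
    (A : Matrix (Fin n) (Fin n) (LaurentPolynomial L)) (hA : IsUnit A.det)
    (B B' C C' : Matrix (Fin n) (Fin n) (Polynomial L)) (d e : Fin n → ℤ)
    (hB : IsUnit B.det) (hB' : IsUnit B'.det) (hC : IsUnit C.det) (hC' : IsUnit C'.det)
    (hd : Antitone d) (he : Antitone e)
    (h1 : B.map (Polynomial.toLaurent : Polynomial L → LaurentPolynomial L) * A *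
        C.map (fun p => Polynomial.eval₂ (LaurentPolynomial.C : L →+* LaurentPolynomial L)
          (T (-1)) p) = Matrix.diagonal (fun i => T (d i)))
    (h2 : B'.map (Polynomial.toLaurent : Polynomial L → LaurentPolynomial L) * A *
        C'.map (fun p => Polynomial.eval₂ (LaurentPolynomial.C : L →+* LaurentPolynomial L)
          (T (-1)) p) = Matrix.diagonal (fun i => T (e i))) :
    d = e := by
  funext k
  exact le_antisymm (half n A hA B B' C C' d e hB hB' hC hC' hd he h1 h2 k)
    (half n A hA B' B C' C e d hB' hB hC' hC he hd h2 h1 k)
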